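/- Let A be a semi-local Noetherian commutative ring. If every minimal prime ideal of A is contained in a unique maximal ideal, then A is isomorphic (as a ring) to a finite product of local rings. -/

import Mathlib

/-- A semi-local Noetherian commutative ring in which every minimal prime is
contained in a unique maximal ideal is isomorphic to a finite product of local rings. -/
theorem stmt_0 {A : Type} [CommRing A] [IsNoetherianRing A]
    (hsemilocal : {I : Ideal A | I.IsMaximal}.Finite)
    (h : ∀ p ∈ minimalPrimes A, ∃! m : Ideal A, m.IsMaximal ∧ p ≤ m) :
    ∃ (n : ℕ) (R : Fin n → Type) (inst : ∀ i, CommRing (R i)),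
      (∀ i, @IsLocalRing (R i) ((inst i).toRing.toSemiring)) ∧
      Nonempty (A ≃+* ∀ i, R i) := by
  classical
  set M := hsemilocal.toFinset with hM
  set n := M.card with hn
  let m : Fin n → Ideal A := fun i => (M.equivFin.symm i : Ideal A)
  have hmmax : ∀ i, (m i).IsMaximal := fun i => by
    have := (M.equivFin.symm i).2
    exact hsemilocal.mem_toFinset.mp this
  have hminj : Function.Injective m := fun i j hij =>
    M.equivFin.symm.injective (Subtype.ext hij)
  have hmsurj : ∀ m' : Ideal A, m'.IsMaximal → ∃ i, m i = m' := fun m' hm' => by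
    have hmem : m' ∈ M := by rw [hM, Set.Finite.mem_toFinset]; exact hm'
    exact ⟨M.equivFin ⟨m', hmem⟩, by simp [m]⟩
  -- the closed pieces of `Spec A`
  let C : Fin n → Set (PrimeSpectrum A) :=
    fun i => ⋃ p ∈ {p | p ∈ minimalPrimes A ∧ p ≤ m i}, PrimeSpectrum.zeroLocus (p : Set A)
  have hmemC : ∀ i (q : PrimeSpectrum A),
      q ∈ C i ↔ ∃ p ∈ minimalPrimes A, p ≤ m i ∧ p ≤ q.asIdeal := by
    intro i q
    constructor
    · intro hq
      obtain ⟨p, hp, hq⟩ := Set.mem_iUnion₂.mp hq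
      exact ⟨p, hp.1, hp.2, SetLike.coe_subset_coe.mp ((PrimeSpectrum.mem_zeroLocus _ _).mp hq)⟩
    · rintro ⟨p, hp, hpm, hpq⟩
      exact Set.mem_iUnion₂.mpr ⟨p, ⟨hp, hpm⟩,
        (PrimeSpectrum.mem_zeroLocus _ _).mpr (SetLike.coe_subset_coe.mpr hpq)⟩
  have hcover : ∀ q : PrimeSpectrum A, ∃ i, q ∈ C i := by
    intro q
    haveI := q.isPrime
    obtain ⟨p, hp, hpq⟩ := Ideal.exists_minimalPrimes_le (J := q.asIdeal) bot_le
    haveI hpprime : p.IsPrime := hp.1.1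
    obtain ⟨m', hm', hpm'⟩ := Ideal.exists_le_maximal p hpprime.ne_top
    obtain ⟨i, rfl⟩ := hmsurj m' hm'
    exact ⟨i, (hmemC i q).mpr ⟨p, hp, hpm', hpq⟩⟩
  have hdisj : ∀ i j, i ≠ j → C i ∩ C j = ∅ := by
    intro i j hij
    rw [Set.eq_empty_iff_forall_notMem]
    rintro q ⟨hqi, hqj⟩
    obtain ⟨p, hp, hpm, hpq⟩ := (hmemC i q).mp hqi
    obtain ⟨p', hp', hpm', hpq'⟩ := (hmemC j q).mp hqj
    obtain ⟨m'', hm'', hqm''⟩ := Ideal.exists_le_maximal q.asIdeal q.isPrime.ne_top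
    obtain ⟨mi, _, huniq⟩ := h p hp
    have h1 : m i = mi := huniq _ ⟨hmmax i, hpm⟩
    have h2 : m'' = mi := huniq _ ⟨hm'', hpq.trans hqm''⟩
    obtain ⟨mj, _, huniq'⟩ := h p' hp'
    have h3 : m j = mj := huniq' _ ⟨hmmax j, hpm'⟩
    have h4 : m'' = mj := huniq' _ ⟨hm'', hpq'.trans hqm''⟩
    exact hij (hminj (by rw [h1, ← h2, h4, ← h3]))
  have hSfin : (minimalPrimes A).Finite := minimalPrimes.finite_of_isNoetherianRing A
  have hCclosed : ∀ i, IsClosed (C i) := fun i =>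
    Set.Finite.isClosed_biUnion (hSfin.subset fun p hp => hp.1)
      fun p _ => PrimeSpectrum.isClosed_zeroLocus _
  have hCclopen : ∀ i, IsClopen (C i) := by
    intro i
    refine ⟨hCclosed i, ?_⟩
    rw [← isClosed_compl_iff]
    have hcompl : (C i)ᶜ = ⋃ j ∈ {j | j ≠ i}, C j := by
      ext q
      constructor
      · intro hq
        obtain ⟨j, hj⟩ := hcover q
        have hji : j ≠ i := by rintro rfl; exact hq hj
        exact Set.mem_iUnion₂.mpr ⟨j, hji, hj⟩
      · intro hq hqi
        obtain ⟨j, hji, hj⟩ := Set.mem_iUnion₂.mp hq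
        exact Set.eq_empty_iff_forall_notMem.mp (hdisj j i hji) q ⟨hj, hqi⟩
    rw [hcompl]
    exact Set.Finite.isClosed_biUnion (Set.toFinite _) fun j _ => hCclosed j
  -- idempotents realizing each piece
  have hexist : ∀ i, ∃ e : A, IsIdempotentElem e ∧ PrimeSpectrum.zeroLocus {e} = C i := by
    intro i
    obtain ⟨e, he, hbe⟩ :=
      PrimeSpectrum.exists_idempotent_basicOpen_eq_of_isClopen (hCclopen i).compl
    refine ⟨e, he, ?_⟩
    rw [PrimeSpectrum.basicOpen_eq_zeroLocus_compl] at hbe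
    exact compl_injective hbe.symm
  choose e he hze using hexist
  have hmem : ∀ i (q : PrimeSpectrum A), e i ∈ q.asIdeal ↔ q ∈ C i := by
    intro i q
    rw [← hze i, PrimeSpectrum.mem_zeroLocus, Set.singleton_subset_iff]
    rfl
  have hnil : ∀ x : A, (∀ q : PrimeSpectrum A, x ∈ q.asIdeal) → IsNilpotent x := by
    intro x hx
    rw [← mem_nilradical, nilradical_eq_sInf, Ideal.mem_sInf]
    intro J hJ
    exact hx ⟨J, hJ⟩
  have hzero : ∀ x : A, IsIdempotentElem x → IsNilpotent x → x = 0 := fun x hx hnx =>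
    eq_of_isNilpotent_sub_of_isIdempotentElem hx IsIdempotentElem.zero (by simpa using hnx)
  have hone_sub : ∀ i (q : PrimeSpectrum A), q ∉ C i → (1 - e i) ∈ q.asIdeal := by
    intro i q hq
    have h0 : e i * (1 - e i) ∈ q.asIdeal := by
      rw [mul_sub, mul_one, (he i).eq, sub_self]
      exact zero_mem _
    rcases q.isPrime.mem_or_mem h0 with h' | h'
    · exact absurd ((hmem i q).mp h') hq
    · exact h'
  have horth : ∀ i j, i ≠ j → (1 - e i) * (1 - e j) = 0 := by
    intro i j hij
    refine hzero _ (IsIdempotentElem.mul_of_commute (Commute.all _ _)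
      (he i).one_sub (he j).one_sub) (hnil _ fun q => ?_)
    by_cases hq : q ∈ C i
    · have hq' : q ∉ C j := fun hq' =>
        Set.eq_empty_iff_forall_notMem.mp (hdisj i j hij) q ⟨hq, hq'⟩
      exact Ideal.mul_mem_left _ _ (hone_sub j q hq')
    · exact Ideal.mul_mem_right _ _ (hone_sub i q hq)
  have hprod : ∏ i, e i = 0 := by
    refine hzero _ ?_ (hnil _ fun q => ?_)
    · show (∏ i, e i) * (∏ i, e i) = ∏ i, e i
      rw [← Finset.prod_mul_distrib]
      exact Finset.prod_congr rfl fun i _ => (he i).eq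
    · obtain ⟨i, hqi⟩ := hcover q
      obtain ⟨c, hc⟩ := Finset.dvd_prod_of_mem e (Finset.mem_univ i)
      rw [hc]
      exact Ideal.mul_mem_right _ _ ((hmem i q).mpr hqi)
  have hbij := RingHom.pi_bijective_of_isIdempotentElem e he horth hprod
  refine ⟨n, fun i => A ⧸ Ideal.span {e i}, fun i => inferInstance, fun i => ?_,
    ⟨RingEquiv.ofBijective _ hbij⟩⟩
  -- each factor is local
  haveI : (m i).IsPrime := (hmmax i).isPrime
  have hqC : (⟨m i, (hmmax i).isPrime⟩ : PrimeSpectrum A) ∈ C i := by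
    obtain ⟨p, hp, hpmi⟩ := Ideal.exists_minimalPrimes_le (J := m i) bot_le
    exact (hmemC i _).mpr ⟨p, hp, hpmi, hpmi⟩
  have hei : e i ∈ m i := (hmem i _).mpr hqC
  have hspan : Ideal.span {e i} ≤ m i := by
    rw [Ideal.span_le, Set.singleton_subset_iff]; exact hei
  have hneTop : Ideal.span {e i} ≠ ⊤ := fun ht =>
    (hmmax i).ne_top (top_le_iff.mp (ht ▸ hspan))
  haveI : Nontrivial (A ⧸ Ideal.span {e i}) := Ideal.Quotient.nontrivial_iff.mpr hneTop
  apply IsLocalRing.of_unique_max_ideal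
  obtain ⟨J₀, hJ₀⟩ := Ideal.exists_maximal (A ⧸ Ideal.span {e i})
  have key : ∀ J : Ideal (A ⧸ Ideal.span {e i}), J.IsMaximal →
      J.comap (Ideal.Quotient.mk (Ideal.span {e i})) = m i := by
    intro J hJ
    haveI := hJ
    have hc : (J.comap (Ideal.Quotient.mk (Ideal.span {e i}))).IsMaximal :=
      Ideal.comap_isMaximal_of_surjective _ Ideal.Quotient.mk_surjective
    have heiJ : e i ∈ J.comap (Ideal.Quotient.mk (Ideal.span {e i})) := by
      show Ideal.Quotient.mk (Ideal.span {e i}) (e i) ∈ J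
      have h0 : Ideal.Quotient.mk (Ideal.span {e i}) (e i) = 0 :=
        Ideal.Quotient.eq_zero_iff_mem.mpr (Ideal.subset_span (Set.mem_singleton _))
      rw [h0]
      exact J.zero_mem
    have hptC : (⟨_, hc.isPrime⟩ : PrimeSpectrum A) ∈ C i := (hmem i _).mp heiJ
    obtain ⟨p, hp, hpmi, hpJ⟩ := (hmemC i _).mp hptC
    obtain ⟨mm, _, huq⟩ := h p hp
    have h1 := huq _ ⟨hmmax i, hpmi⟩
    have h2 := huq _ ⟨hc, hpJ⟩
    rw [h2, h1]
  refine ⟨J₀, hJ₀, fun J hJ => ?_⟩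
  exact Ideal.comap_injective_of_surjective _ Ideal.Quotient.mk_surjective
    ((key J hJ).trans (key J₀ hJ₀).symm)
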